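/- Let p be an odd prime with p ∤ ab, let e ≥ 1, and let 0 ≤ T < k be integers. Then p^e is (T,k)-good with respect to (a,b) if and only if ord_p(a·b⁻¹) is even and T ≡ ord_{p^e}(a·b⁻¹)/2 (mod gcd(k, ord_{p^e}(a·b⁻¹))). -/

import Mathlib

/-- An integer coprime to `n` casts to a unit of `ZMod n`. -/
lemma aux_cast_isUnit {n : ℕ} {b : ℤ} (h : IsCoprime (n : ℤ) b) :
    IsUnit ((b : ℤ) : ZMod n) := by
  obtain ⟨x, y, hxy⟩ := h
  apply IsUnit.of_mul_eq_one ((y : ℤ) : ZMod n)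
  have h1 := congrArg (fun z : ℤ => (z : ZMod n)) hxy
  push_cast at h1
  rwa [ZMod.natCast_self, mul_zero, zero_add, mul_comm] at h1

lemma aux_p_ne_two {p : ℕ} (hp : p.Prime) (hodd : Odd p) : ¬ p ∣ 2 := by
  intro h
  have h1 := Nat.le_of_dvd (by norm_num) h
  have h2 := hp.two_le
  rw [Nat.odd_iff] at hodd
  omega

/-- Square roots of 1 mod an odd prime power are `±1`. -/
lemma aux_sq_eq_one {p e : ℕ} (hp : p.Prime) (hodd : Odd p) (x : ZMod (p ^ e))
    (hx : x ^ 2 = 1) : x = 1 ∨ x = -1 := by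
  obtain ⟨c, rfl⟩ := ZMod.intCast_surjective x
  have hdvd : ((p : ℤ)) ^ e ∣ (c - 1) * (c + 1) := by
    have h0 : ((c ^ 2 - 1 : ℤ) : ZMod (p ^ e)) = 0 := by push_cast; rw [hx]; ring
    have := (ZMod.intCast_zmod_eq_zero_iff_dvd _ (p ^ e)).mp h0
    push_cast at this
    convert this using 1; ring
  have hp2 : ¬ ((p : ℤ) ∣ (c - 1) ∧ (p : ℤ) ∣ (c + 1)) := by
    rintro ⟨h1, h2⟩
    have h3 : (p : ℤ) ∣ 2 := by
      have := dvd_sub h2 h1; simpa using this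
    exact aux_p_ne_two hp hodd (by exact_mod_cast h3)
  have hpi : Prime (p : ℤ) := Nat.prime_iff_prime_int.mp hp
  by_cases hc1 : (p : ℤ) ∣ (c - 1)
  · have hcop : IsCoprime ((p : ℤ) ^ e) (c + 1) :=
      ((hpi.coprime_iff_not_dvd).mpr (fun h => hp2 ⟨hc1, h⟩)).pow_left
    have hd := hcop.dvd_of_dvd_mul_right (by rwa [mul_comm] at hdvd)
    left
    have h0 : ((c - 1 : ℤ) : ZMod (p ^ e)) = 0 := by
      rw [ZMod.intCast_zmod_eq_zero_iff_dvd]; push_cast; exact hd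
    push_cast at h0
    linear_combination h0
  · have hcop : IsCoprime ((p : ℤ) ^ e) (c - 1) :=
      ((hpi.coprime_iff_not_dvd).mpr hc1).pow_left
    have hd := hcop.dvd_of_dvd_mul_left hdvd
    right
    have h0 : ((c + 1 : ℤ) : ZMod (p ^ e)) = 0 := by
      rw [ZMod.intCast_zmod_eq_zero_iff_dvd]; push_cast; exact hd
    push_cast at h0
    linear_combination h0

/-- `-1 ≠ 1` mod an odd prime power. -/
lemma aux_neg_one_ne_one {p e : ℕ} (hp : p.Prime) (hodd : Odd p) (he : 1 ≤ e) :
    (-1 : ZMod (p ^ e)) ≠ 1 := by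
  intro h
  have h2 : ((2 : ℤ) : ZMod (p ^ e)) = 0 := by
    push_cast
    linear_combination -h
  rw [ZMod.intCast_zmod_eq_zero_iff_dvd] at h2
  have h3 : (p : ℤ) ∣ 2 := by
    refine dvd_trans ?_ h2
    exact_mod_cast (dvd_pow_self p (by omega : e ≠ 0)).natCast (α := ℤ)
  exact aux_p_ne_two hp hodd (by exact_mod_cast h3)

/-- `u ^ m = -1` iff the order of `u` is even and `m ≡ ord/2 (mod ord)`. -/
lemma aux_pow_eq_neg_one_iff {p e : ℕ} (hp : p.Prime) (hodd : Odd p) (he : 1 ≤ e)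
    {u : ZMod (p ^ e)} (hu : IsUnit u) (m : ℕ) :
    u ^ m = -1 ↔ Even (orderOf u) ∧ m ≡ orderOf u / 2 [MOD orderOf u] := by
  haveI : NeZero (p ^ e) := ⟨pow_ne_zero _ hp.pos.ne'⟩
  set d := orderOf u with hd
  have hdpos : 0 < d := by
    rw [hd, ← hu.unit_spec, orderOf_units]
    exact orderOf_pos _
  constructor
  · intro h
    have hne : u ^ m ≠ 1 := by rw [h]; exact aux_neg_one_ne_one hp hodd he
    have hndvd : ¬ d ∣ m := fun hdm => hne (orderOf_dvd_iff_pow_eq_one.mp hdm)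
    have h2m : d ∣ 2 * m := by
      apply orderOf_dvd_of_pow_eq_one
      rw [mul_comm, pow_mul, h]; ring
    have hrne : m % d ≠ 0 := fun h0 => hndvd (Nat.dvd_of_mod_eq_zero h0)
    have hrlt : m % d < d := Nat.mod_lt _ hdpos
    have h2r : d ∣ 2 * (m % d) := by
      have hmm : 2 * (m % d) ≡ 2 * m [MOD d] := Nat.ModEq.mul_left 2 (Nat.mod_modEq m d)
      have h0 : 2 * m ≡ 0 [MOD d] := (Nat.modEq_zero_iff_dvd).mpr h2m
      exact (Nat.modEq_zero_iff_dvd).mp (hmm.trans h0)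
    obtain ⟨t, ht⟩ := h2r
    have ht1 : t = 1 := by
      by_contra hne1
      rcases Nat.lt_or_ge t 1 with h' | h'
      · have ht0 : t = 0 := by omega
        rw [ht0, mul_zero] at ht
        omega
      · have h2 : 2 ≤ t := by omega
        nlinarith [ht, hrlt, hdpos]
    rw [ht1, mul_one] at ht
    have hdeq : d = 2 * (m % d) := ht.symm
    have hrlt2 : m % d < d := hrlt
    constructor
    · exact ⟨m % d, by omega⟩
    · show m % d = (d / 2) % d
      rw [Nat.mod_eq_of_lt (by omega : d / 2 < d)]
      omega
  · rintro ⟨⟨t, ht⟩, hm⟩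
    have htpos : 0 < t := by omega
    have hd2 : d / 2 = t := by omega
    have h1 : u ^ m = u ^ t :=
      calc u ^ m = u ^ (m % orderOf u) := (pow_mod_orderOf u m).symm
        _ = u ^ (d / 2 % orderOf u) := by rw [← hd, hm]
        _ = u ^ (d / 2) := pow_mod_orderOf u _
        _ = u ^ t := by rw [hd2]
    rw [h1]
    have hsq : (u ^ t) ^ 2 = 1 := by
      rw [← pow_mul]
      have h2 : t * 2 = d := by omega
      rw [h2, hd, pow_orderOf_eq_one]
    rcases aux_sq_eq_one hp hodd _ hsq with h | h
    · exfalso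
      have hdt : d ∣ t := hd ▸ orderOf_dvd_of_pow_eq_one h
      have := Nat.le_of_dvd htpos hdt
      omega
    · exact h

/-- Divisibility of `a^m + b^m` by `p^e` in terms of `u = a·b⁻¹` mod `p^e`. -/
lemma aux_dvd_iff {p e : ℕ} {a b : ℤ} (hb : IsUnit ((b : ℤ) : ZMod (p ^ e))) (m : ℕ) :
    ((p : ℤ) ^ e ∣ a ^ m + b ^ m) ↔
      ((a : ZMod (p ^ e)) * (b : ZMod (p ^ e))⁻¹) ^ m = -1 := by
  have hbi : ((b : ZMod (p ^ e)))⁻¹ * (b : ZMod (p ^ e)) = 1 := ZMod.inv_mul_of_unit _ hb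
  have hcast : ((p : ℤ) ^ e ∣ a ^ m + b ^ m) ↔
      ((a : ZMod (p ^ e)) ^ m + (b : ZMod (p ^ e)) ^ m = 0) := by
    rw [show ((p : ℤ) ^ e) = (((p ^ e : ℕ) : ℤ)) by push_cast; ring,
      ← ZMod.intCast_zmod_eq_zero_iff_dvd]
    push_cast
    rfl
  rw [hcast]
  constructor
  · intro h
    have ha : (a : ZMod (p ^ e)) ^ m = -(b : ZMod (p ^ e)) ^ m := by
      linear_combination h
    calc ((a : ZMod (p ^ e)) * (b : ZMod (p ^ e))⁻¹) ^ m
        = (a : ZMod (p ^ e)) ^ m * ((b : ZMod (p ^ e))⁻¹) ^ m := mul_pow _ _ _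
      _ = -(((b : ZMod (p ^ e)))⁻¹ * (b : ZMod (p ^ e))) ^ m := by rw [ha]; ring
      _ = -1 := by rw [hbi, one_pow]
  · intro h
    have h2 : (a : ZMod (p ^ e)) ^ m * ((b : ZMod (p ^ e))⁻¹) ^ m * (b : ZMod (p ^ e)) ^ m
        = -1 * (b : ZMod (p ^ e)) ^ m := by rw [← mul_pow, h]
    have h3 : (a : ZMod (p ^ e)) ^ m * (((b : ZMod (p ^ e)))⁻¹ * (b : ZMod (p ^ e))) ^ m
        = -(b : ZMod (p ^ e)) ^ m := by rw [mul_pow]; linear_combination h2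
    rw [hbi, one_pow, mul_one] at h3
    rw [h3]; ring

/-- Parity of the order mod `p` equals parity of the order mod `p^e`. -/
lemma aux_parity {p e : ℕ} (hp : p.Prime) (hodd : Odd p) (he : 1 ≤ e) {c : ℤ}
    (hc : IsUnit ((c : ℤ) : ZMod (p ^ e))) :
    (Even (orderOf ((c : ℤ) : ZMod p)) ↔ Even (orderOf ((c : ℤ) : ZMod (p ^ e)))) := by
  haveI : NeZero (p ^ e) := ⟨pow_ne_zero _ hp.pos.ne'⟩
  haveI : Fact p.Prime := ⟨hp⟩
  set d := orderOf ((c : ℤ) : ZMod (p ^ e)) with hd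
  set d1 := orderOf ((c : ℤ) : ZMod p) with hd1
  have hpe : p ∣ p ^ e := dvd_pow_self p (by omega)
  have hmap : ∀ n : ℕ, ((c : ZMod (p ^ e)) ^ n = 1) → ((c : ZMod p) ^ n = 1) := by
    intro n h
    have := congrArg (ZMod.castHom hpe (ZMod p)) h
    rw [map_pow, map_one, map_intCast] at this
    exact this
  have hdvd1 : d1 ∣ d := orderOf_dvd_of_pow_eq_one (hmap d (hd ▸ pow_orderOf_eq_one _))
  -- d ∣ d1 * p^(e-1)
  have hdvd2 : d ∣ d1 * p ^ (e - 1) := by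
    apply orderOf_dvd_of_pow_eq_one
    have h1 : ((c : ZMod p)) ^ d1 = 1 := hd1 ▸ pow_orderOf_eq_one _
    have h2 : (p : ℤ) ∣ c ^ d1 - 1 := by
      have h0 : ((c ^ d1 - 1 : ℤ) : ZMod p) = 0 := by push_cast; rw [h1]; ring
      exact_mod_cast (ZMod.intCast_zmod_eq_zero_iff_dvd _ p).mp h0
    have h3 : ((p : ℤ)) ^ ((e - 1) + 1) ∣ (c ^ d1) ^ (p ^ (e - 1)) - 1 ^ (p ^ (e - 1)) :=
      dvd_sub_pow_of_dvd_sub (by simpa using h2) (e - 1)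
    rw [one_pow] at h3
    have h4 : ((p : ℤ)) ^ e ∣ (c ^ d1) ^ (p ^ (e - 1)) - 1 := by
      rwa [show (e - 1) + 1 = e by omega] at h3
    have h5 : (((c ^ d1) ^ (p ^ (e - 1)) - 1 : ℤ) : ZMod (p ^ e)) = 0 := by
      rw [ZMod.intCast_zmod_eq_zero_iff_dvd]; push_cast; push_cast at h4; exact h4
    push_cast at h5
    rw [pow_mul]
    linear_combination h5
  have hp2 : p ≠ 2 := by
    rintro rfl
    rw [Nat.odd_iff] at hodd
    omega
  constructor
  · intro h
    obtain ⟨t, ht⟩ := dvd_trans h.two_dvd hdvd1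
    exact ⟨t, by omega⟩
  · intro h
    have h2 : 2 ∣ d1 * p ^ (e - 1) := dvd_trans h.two_dvd hdvd2
    have hcop : Nat.Coprime 2 (p ^ (e - 1)) :=
      Nat.Coprime.pow_right _ ((Nat.coprime_primes Nat.prime_two hp).mpr (Ne.symm hp2))
    obtain ⟨t, ht⟩ := hcop.dvd_of_dvd_mul_right h2
    exact ⟨t, by omega⟩

/-- Solvability of `k*s + T ≡ d/2 (mod d)` with `s > 0`. -/
lemma aux_solvable (k T d : ℕ) (hk : 0 < k) (hd : 0 < d) :
    (∃ s : ℕ, 0 < s ∧ (k * s + T) ≡ d / 2 [MOD d]) ↔ T ≡ d / 2 [MOD Nat.gcd k d] := by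
  set g := Nat.gcd k d with hg
  constructor
  · rintro ⟨s, hs, h⟩
    have h1 : (k * s + T) ≡ d / 2 [MOD g] := h.of_dvd (Nat.gcd_dvd_right k d)
    have h2 : 0 + T ≡ k * s + T [MOD g] := by
      apply Nat.ModEq.add_right
      exact ((Nat.modEq_zero_iff_dvd).mpr ((Nat.gcd_dvd_left k d).trans ⟨s, rfl⟩)).symm
    simpa using h2.trans h1
  · intro h
    have hgd : (g : ℤ) ∣ ((d / 2 : ℕ) : ℤ) - (T : ℤ) := by
      rw [← Int.modEq_iff_dvd]
      exact_mod_cast Int.natCast_modEq_iff.mpr h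
    obtain ⟨c, hc⟩ := hgd
    set S : ℤ := Nat.gcdA k d * c with hS
    set M : ℤ := S % d + d with hM
    have hdz : (0 : ℤ) < d := by exact_mod_cast hd
    have hMpos : 0 < M := by
      have := Int.emod_nonneg S (by omega : (d : ℤ) ≠ 0)
      omega
    have hbez : (g : ℤ) = k * Nat.gcdA k d + d * Nat.gcdB k d := Nat.gcd_eq_gcd_ab k d
    have hmod : (k : ℤ) * M + T ≡ ((d / 2 : ℕ) : ℤ) [ZMOD (d : ℤ)] := by
      have e0 : M ≡ S [ZMOD (d : ℤ)] := by
        rw [Int.modEq_iff_dvd, hM, Int.emod_def]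
        exact ⟨S / d - 1, by ring⟩
      have e1 : (k : ℤ) * M ≡ k * S [ZMOD (d : ℤ)] := e0.mul_left _
      have e2 : (k : ℤ) * S ≡ g * c [ZMOD (d : ℤ)] := by
        rw [Int.modEq_iff_dvd]
        exact ⟨Nat.gcdB k d * c, by rw [hS]; linear_combination c * hbez⟩
      calc (k : ℤ) * M + T ≡ k * S + T [ZMOD (d : ℤ)] := e1.add_right _
        _ ≡ g * c + T [ZMOD (d : ℤ)] := e2.add_right _
        _ = ((d / 2 : ℕ) : ℤ) := by linarith [hc]
    refine ⟨M.toNat, by omega, ?_⟩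
    have hMt : ((M.toNat : ℤ)) = M := Int.toNat_of_nonneg (le_of_lt hMpos)
    have hfin : ((k * M.toNat + T : ℕ) : ℤ) ≡ ((d / 2 : ℕ) : ℤ) [ZMOD ((d : ℕ) : ℤ)] := by
      push_cast [hMt]
      exact hmod
    exact Int.natCast_modEq_iff.mp hfin

/-- `p^e` is `(T,k)`-good w.r.t. `(a,b)` iff `ord_p(a·b⁻¹)` is even and
`T ≡ ord_{p^e}(a·b⁻¹)/2 (mod gcd(k, ord_{p^e}(a·b⁻¹)))`. -/
theorem stmt_3 (a b : ℤ) (ha : a ≠ 0) (hb : b ≠ 0) (hab : IsCoprime a b)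
    (p : ℕ) (hp : p.Prime) (hodd : Odd p) (hpab : ¬ (p : ℤ) ∣ a * b)
    (e : ℕ) (he : 1 ≤ e) (k T : ℕ) (hT : T < k) :
    (∃ s : ℕ, 0 < s ∧ ((p : ℤ) ^ e) ∣ a ^ (k * s + T) + b ^ (k * s + T)) ↔
      Even (orderOf ((a : ZMod p) * (b : ZMod p)⁻¹)) ∧
        T ≡ orderOf ((a : ZMod (p ^ e)) * (b : ZMod (p ^ e))⁻¹) / 2
          [MOD Nat.gcd k (orderOf ((a : ZMod (p ^ e)) * (b : ZMod (p ^ e))⁻¹))] := by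
  haveI : NeZero (p ^ e) := ⟨pow_ne_zero _ hp.pos.ne'⟩
  haveI : Fact p.Prime := ⟨hp⟩
  have hpi : Prime (p : ℤ) := Nat.prime_iff_prime_int.mp hp
  have hpa : ¬ (p : ℤ) ∣ a := fun h => hpab (h.mul_right b)
  have hpb : ¬ (p : ℤ) ∣ b := fun h => hpab (h.mul_left a)
  have hcopa : IsCoprime (((p ^ e : ℕ) : ℤ)) a := by
    push_cast
    exact ((hpi.coprime_iff_not_dvd).mpr hpa).pow_left
  have hcopb : IsCoprime (((p ^ e : ℕ) : ℤ)) b := by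
    push_cast
    exact ((hpi.coprime_iff_not_dvd).mpr hpb).pow_left
  have hua : IsUnit ((a : ℤ) : ZMod (p ^ e)) := aux_cast_isUnit hcopa
  have hub : IsUnit ((b : ℤ) : ZMod (p ^ e)) := aux_cast_isUnit hcopb
  set u : ZMod (p ^ e) := (a : ZMod (p ^ e)) * (b : ZMod (p ^ e))⁻¹ with hu
  have huu : IsUnit u := hua.mul (IsUnit.of_mul_eq_one _ (ZMod.inv_mul_of_unit _ hub))
  set d := orderOf u with hd
  have hdpos : 0 < d := by
    rw [hd, ← huu.unit_spec, orderOf_units]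
    exact orderOf_pos _
  -- find an integer c with (c : ZMod (p^e)) = u, and reconcile mod p
  have hbinv : ((b : ZMod (p ^ e)))⁻¹ * (b : ZMod (p ^ e)) = 1 := ZMod.inv_mul_of_unit _ hub
  obtain ⟨c, hc⟩ := ZMod.intCast_surjective u
  have hcp : ((c : ℤ) : ZMod p) = (a : ZMod p) * (b : ZMod p)⁻¹ := by
    have hpe : p ∣ p ^ e := dvd_pow_self p (by omega)
    have h1 := congrArg (ZMod.castHom hpe (ZMod p)) hc
    rw [map_intCast, hu, map_mul, map_intCast] at h1
    have h2 : (ZMod.castHom hpe (ZMod p)) ((b : ZMod (p ^ e))⁻¹) = (b : ZMod p)⁻¹ := by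
      have h3 : (ZMod.castHom hpe (ZMod p)) ((b : ZMod (p ^ e))⁻¹) * (b : ZMod p) = 1 := by
        rw [show ((b : ℤ) : ZMod p) = (ZMod.castHom hpe (ZMod p)) ((b : ℤ) : ZMod (p ^ e)) by
          rw [map_intCast], ← map_mul, hbinv, map_one]
      exact eq_inv_of_mul_eq_one_left h3
    rw [h2] at h1
    exact h1
  have hparity : Even (orderOf ((a : ZMod p) * (b : ZMod p)⁻¹)) ↔ Even d := by
    rw [← hcp, hd, ← hc]
    exact aux_parity hp hodd he (hc ▸ huu)
  constructor
  · rintro ⟨s, hs, hdvd⟩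
    have h1 := (aux_dvd_iff hub (k * s + T)).mp hdvd
    rw [← hu] at h1
    obtain ⟨heven, hmod⟩ := (aux_pow_eq_neg_one_iff hp hodd he huu (k * s + T)).mp h1
    rw [← hd] at heven hmod
    refine ⟨hparity.mpr heven, ?_⟩
    exact (aux_solvable k T d (by omega) hdpos).mp ⟨s, hs, hmod⟩
  · rintro ⟨heven, hmod⟩
    have hevend : Even d := hparity.mp heven
    obtain ⟨s, hs, hseq⟩ := (aux_solvable k T d (by omega) hdpos).mpr hmod
    refine ⟨s, hs, ?_⟩
    rw [aux_dvd_iff hub, ← hu]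
    exact (aux_pow_eq_neg_one_iff hp hodd he huu _).mpr ⟨hd ▸ hevend, hd ▸ hseq⟩
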